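/- Let M ≥ 1, c ∈ ℂ^M, and define the trigonometric polynomial v(f) = Σ_{i=0}^{M−1} c_i·exp(2πi·f·i) for f ∈ ℝ. Then for all f₁, f₂ ∈ ℝ, |v(f₁)| − |v(f₂)| ≤ 2π·M·|f₁ − f₂| · sup_{f ∈ [0,1)} |v(f)|. -/

import Mathlib

open Complex Finset

noncomputable def e2 (x : ℝ) : ℂ := Complex.exp (2 * Real.pi * Complex.I * x)

lemma e2_add (x y : ℝ) : e2 (x + y) = e2 x * e2 y := by
  rw [e2, e2, e2, ← Complex.exp_add]
  congr 1
  push_cast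
  ring

lemma e2_zero : e2 0 = 1 := by simp [e2]

lemma e2_int (j : ℤ) : e2 (j : ℝ) = 1 := by
  rw [e2, show (2 * (Real.pi:ℂ) * Complex.I * ((j:ℝ):ℂ)) = j * (2 * Real.pi * Complex.I) by push_cast; ring]
  exact Complex.exp_int_mul_two_pi_mul_I j

lemma norm_e2 (x : ℝ) : ‖e2 x‖ = 1 := by
  rw [e2, show (2 * (Real.pi:ℂ) * Complex.I * ((x:ℝ):ℂ)) = ((2 * Real.pi * x : ℝ):ℂ) * Complex.I by push_cast; ring]
  exact Complex.norm_exp_ofReal_mul_I _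

lemma conj_e2 (x : ℝ) : (starRingEnd ℂ) (e2 x) = e2 (-x) := by
  rw [e2, e2, ← Complex.exp_conj]
  congr 1
  rw [map_mul, map_mul, map_mul, Complex.conj_I]
  simp only [Complex.conj_ofReal, map_ofNat]
  push_cast
  ring

lemma e2_pow (x : ℝ) (m : ℕ) : e2 x ^ m = e2 (m * x) := by
  rw [e2, e2, ← Complex.exp_nat_mul]
  congr 1
  push_cast
  ring

lemma e2_ne_one (N : ℕ) (hN : 0 < N) (j : ℤ) (hj : j ≠ 0) (hj2 : |j| < N) :
    e2 ((j : ℝ) / N) ≠ 1 := by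
  intro h
  rw [e2, Complex.exp_eq_one_iff] at h
  obtain ⟨m, hm⟩ := h
  have h2 : (2 * (Real.pi:ℂ) * Complex.I) ≠ 0 := by
    simp [Real.pi_ne_zero, Complex.I_ne_zero]
  have hm2 : 2 * (Real.pi:ℂ) * Complex.I * (((j:ℝ)/N : ℝ) : ℂ)
      = 2 * (Real.pi:ℂ) * Complex.I * (m : ℂ) := by rw [hm]; ring
  have hm3 : (((j:ℝ)/N : ℝ) : ℂ) = ((m:ℝ) : ℂ) := by
    have := mul_left_cancel₀ h2 hm2
    rw [this]; norm_num
  have hm4 : (j:ℝ)/N = (m:ℝ) := Complex.ofReal_inj.mp hm3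
  have hN' : (N:ℝ) ≠ 0 := Nat.cast_ne_zero.mpr hN.ne'
  have hj5 : (j:ℝ) = (m:ℝ) * N := by field_simp at hm4; linarith [hm4]
  have hj6 : j = m * N := by exact_mod_cast hj5
  have hm0 : m ≠ 0 := by rintro rfl; simp at hj6; exact hj hj6
  have : (N:ℤ) ≤ |j| := by
    rw [hj6, abs_mul]
    calc (N:ℤ) = 1 * N := (one_mul _).symm
    _ ≤ |m| * |(N:ℤ)| := by
        apply mul_le_mul
        · exact Int.one_le_abs hm0
        · simp
        · positivity
        · positivity
  omega

lemma e2_orth (N : ℕ) (hN : 0 < N) (j : ℤ) (hj : j ≠ 0) (hj2 : |j| < N) :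
    ∑ m ∈ Finset.range N, e2 ((j : ℝ) * m / N) = 0 := by
  have key : ∀ m : ℕ, e2 ((j:ℝ) * m / N) = e2 ((j:ℝ)/N) ^ m := by
    intro m
    rw [e2_pow]
    congr 1
    ring
  rw [Finset.sum_congr rfl fun m _ => key m]
  rw [geom_sum_eq (e2_ne_one N hN j hj hj2)]
  rw [e2_pow]
  have : (N : ℝ) * ((j:ℝ)/N) = (j:ℝ) := by
    field_simp
  rw [this, e2_int]
  simp

lemma count_lemma (n k : ℕ) (hk : k ≤ n) (z : ℂ) :
    ∑ a ∈ Finset.range n, ∑ b ∈ Finset.range n,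
      (if ((n:ℤ) + a - b - k = 0) then z else 0) = (k:ℂ) * z := by
  have h1 : ∀ a ∈ Finset.range n, (∑ b ∈ Finset.range n,
      (if ((n:ℤ) + a - b - k = 0) then z else 0)) = if a < k then z else 0 := by
    intro a _
    have h2 : ∀ b ∈ Finset.range n, (if ((n:ℤ) + a - b - k = 0) then z else 0)
        = if b = n + a - k then z else 0 := by
      intro b _
      congr 1
      simp only [eq_iff_iff]
      omega
    rw [Finset.sum_congr rfl h2, Finset.sum_ite_eq' (Finset.range n) (n + a - k) (fun _ => z)]
    congr 1
    simp only [Finset.mem_range, eq_iff_iff]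
    omega
  rw [Finset.sum_congr rfl h1, Finset.sum_ite, Finset.sum_const, Finset.sum_const,
    smul_zero, add_zero]
  have h3 : Finset.filter (fun a => a < k) (Finset.range n) = Finset.range k := by
    ext a
    simp only [Finset.mem_filter, Finset.mem_range]
    omega
  rw [h3, Finset.card_range, nsmul_eq_mul]


lemma e2_eq (x1 x2 x3 x4 y1 y2 : ℝ) (h : x1+x2+x3+x4 = y1+y2) (z : ℂ) :
    e2 x1 * e2 x2 * e2 x3 * (z * e2 x4) = z * e2 y1 * e2 y2 := by
  have l : e2 x1 * e2 x2 * e2 x3 * (z * e2 x4) = z * e2 (x1+x2+x3+x4) := by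
    rw [e2_add, e2_add, e2_add]; ring
  have r : z * e2 y1 * e2 y2 = z * e2 (y1+y2) := by
    rw [e2_add]; ring
  rw [l, r, h]

lemma core_identity (M : ℕ) (hM : 1 ≤ M) (c : Fin M → ℂ) (f : ℝ) :
    ((2*(M-1)+1 : ℕ):ℂ) * ∑ k : Fin M, (k:ℂ) * c k * e2 (f * k)
    = ∑ m ∈ Finset.range (2*(M-1)+1),
        (e2 (((M-1:ℕ):ℝ) * m / (2*(M-1)+1:ℕ))
          * (∑ a ∈ Finset.range (M-1), e2 ((a:ℝ) * m / (2*(M-1)+1:ℕ)))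
          * (starRingEnd ℂ) (∑ b ∈ Finset.range (M-1), e2 ((b:ℝ) * m / (2*(M-1)+1:ℕ))))
        * (∑ k : Fin M, c k * e2 ((f - (m:ℝ)/(2*(M-1)+1:ℕ)) * k)) := by
  set n := M - 1 with hn
  set N := 2*n+1 with hN
  have hNpos : 0 < N := by omega
  have hNne : (N:ℝ) ≠ 0 := Nat.cast_ne_zero.mpr hNpos.ne'
  have expand : ∀ m ∈ Finset.range N,
      (e2 ((n:ℝ) * m / N)
        * (∑ a ∈ Finset.range n, e2 ((a:ℝ) * m / N))
        * (starRingEnd ℂ) (∑ b ∈ Finset.range n, e2 ((b:ℝ) * m / N)))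
      * (∑ k : Fin M, c k * e2 ((f - (m:ℝ)/N) * k))
      = ∑ k : Fin M, ∑ a ∈ Finset.range n, ∑ b ∈ Finset.range n,
          c k * e2 (f * k) * e2 (((n + a - b - (k:ℕ) : ℤ):ℝ) * m / N) := by
    intro m _
    rw [map_sum]
    simp only [conj_e2]
    simp only [Finset.mul_sum, Finset.sum_mul]
    refine Finset.sum_congr rfl fun k _ => ?_
    rw [Finset.sum_comm]
    refine Finset.sum_congr rfl fun a _ => Finset.sum_congr rfl fun b _ => ?_
    apply e2_eq
    field_simp
    push_cast
    ring
  rw [Finset.sum_congr rfl expand]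
  rw [Finset.sum_comm]
  have inner : ∀ k : Fin M,
      (∑ m ∈ Finset.range N, ∑ a ∈ Finset.range n, ∑ b ∈ Finset.range n,
        c k * e2 (f * k) * e2 (((n + a - b - (k:ℕ) : ℤ):ℝ) * m / N))
      = (N:ℂ) * ((k:ℂ) * c k * e2 (f * k)) := by
    intro k
    rw [Finset.sum_comm]
    have h1 : ∀ a ∈ Finset.range n,
        (∑ m ∈ Finset.range N, ∑ b ∈ Finset.range n,
          c k * e2 (f * k) * e2 (((n + a - b - (k:ℕ) : ℤ):ℝ) * m / N))
        = ∑ b ∈ Finset.range n, ∑ m ∈ Finset.range N,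
          c k * e2 (f * k) * e2 (((n + a - b - (k:ℕ) : ℤ):ℝ) * m / N) :=
      fun a _ => Finset.sum_comm
    rw [Finset.sum_congr rfl h1]
    have hsumk : ∀ a ∈ Finset.range n, ∀ b ∈ Finset.range n,
        (∑ m ∈ Finset.range N,
          c k * e2 (f * k) * e2 (((n + a - b - (k:ℕ) : ℤ):ℝ) * m / N))
        = c k * e2 (f * k) * (if ((n + a - b - (k:ℕ) : ℤ) = 0) then (N:ℂ) else 0) := by
      intro a ha b hb
      rw [← Finset.mul_sum]
      congr 1
      by_cases hj : ((n + a - b - (k:ℕ) : ℤ) = 0)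
      · rw [if_pos hj]
        have : ∀ m ∈ Finset.range N,
            e2 (((n + a - b - (k:ℕ) : ℤ):ℝ) * m / N) = 1 := by
          intro m _
          rw [hj]
          norm_num [e2_zero]
        rw [Finset.sum_congr rfl this]
        simp
      · rw [if_neg hj]
        apply e2_orth N hNpos _ hj
        have hk : (k:ℕ) < M := k.isLt
        simp only [Finset.mem_range] at ha hb
        rw [abs_lt]
        constructor <;> omega
    calc ∑ a ∈ Finset.range n, ∑ b ∈ Finset.range n, ∑ m ∈ Finset.range N,
          c k * e2 (f * k) * e2 (((n + a - b - (k:ℕ) : ℤ):ℝ) * m / N)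
        = ∑ a ∈ Finset.range n, ∑ b ∈ Finset.range n,
          c k * e2 (f * k) * (if ((n + a - b - (k:ℕ) : ℤ) = 0) then (N:ℂ) else 0) := by
          exact Finset.sum_congr rfl fun a ha => Finset.sum_congr rfl (hsumk a ha)
      _ = c k * e2 (f * k) * ∑ a ∈ Finset.range n, ∑ b ∈ Finset.range n,
            (if ((n + a - b - (k:ℕ) : ℤ) = 0) then (N:ℂ) else 0) := by
          rw [Finset.mul_sum]
          exact Finset.sum_congr rfl fun a _ => (Finset.mul_sum _ _ _).symm
      _ = c k * e2 (f * k) * (((k:ℕ):ℂ) * N) := by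
          rw [count_lemma n k (by omega : (k:ℕ) ≤ n)]
      _ = (N:ℂ) * ((k:ℂ) * c k * e2 (f * k)) := by ring
  rw [Finset.sum_congr rfl (fun k _ => inner k), ← Finset.mul_sum]

lemma core_bound (M : ℕ) (hM : 1 ≤ M) (c : Fin M → ℂ) (S : ℝ)
    (hS : ∀ g : ℝ, ‖∑ i : Fin M, c i * e2 (g * i)‖ ≤ S) (f : ℝ) :
    ‖∑ k : Fin M, (k:ℂ) * c k * e2 (f * k)‖ ≤ ((M - 1 : ℕ):ℝ) * S := by
  set n := M - 1 with hn
  set N := 2*n+1 with hN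
  have hNpos : 0 < N := by omega
  have hNR : (0:ℝ) < N := by exact_mod_cast hNpos
  set D : ℕ → ℂ := fun m => ∑ a ∈ Finset.range n, e2 ((a:ℝ) * m / N) with hD
  have hDC : ∑ m ∈ Finset.range N, (D m * (starRingEnd ℂ) (D m)) = (n:ℂ) * N := by
    have expand : ∀ m ∈ Finset.range N, D m * (starRingEnd ℂ) (D m)
        = ∑ a ∈ Finset.range n, ∑ b ∈ Finset.range n, e2 (((a - b : ℤ):ℝ) * m / N) := by
      intro m _
      rw [hD, map_sum]
      simp only [conj_e2]
      rw [Finset.sum_mul_sum]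
      refine Finset.sum_congr rfl fun a _ => Finset.sum_congr rfl fun b _ => ?_
      rw [← e2_add]
      congr 1
      field_simp
      push_cast
      ring
    rw [Finset.sum_congr rfl expand, Finset.sum_comm]
    have h1 : ∀ a ∈ Finset.range n,
        (∑ m ∈ Finset.range N, ∑ b ∈ Finset.range n, e2 (((a - b : ℤ):ℝ) * m / N))
        = ∑ b ∈ Finset.range n, ∑ m ∈ Finset.range N, e2 (((a - b : ℤ):ℝ) * m / N) :=
      fun a _ => Finset.sum_comm
    rw [Finset.sum_congr rfl h1]
    have h2 : ∀ a ∈ Finset.range n,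
        (∑ b ∈ Finset.range n, ∑ m ∈ Finset.range N, e2 (((a - b : ℤ):ℝ) * m / N)) = (N:ℂ) := by
      intro a ha
      have h3 : ∀ b ∈ Finset.range n,
          (∑ m ∈ Finset.range N, e2 (((a - b : ℤ):ℝ) * m / N))
          = if b = a then (N:ℂ) else 0 := by
        intro b hb
        by_cases hab : b = a
        · subst hab
          rw [if_pos rfl]
          have : ∀ m ∈ Finset.range N, e2 (((b - b : ℤ):ℝ) * m / N) = 1 := by
            intro m _
            norm_num [e2_zero]
          rw [Finset.sum_congr rfl this]
          simp
        · rw [if_neg hab]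
          apply e2_orth N hNpos
          · omega
          · simp only [Finset.mem_range] at ha hb
            rw [abs_lt]
            constructor <;> omega
      rw [Finset.sum_congr rfl h3, Finset.sum_ite_eq' (Finset.range n) a (fun _ => (N:ℂ)),
        if_pos ha]
    rw [Finset.sum_congr rfl h2, Finset.sum_const, Finset.card_range, nsmul_eq_mul]
  have hDsum : ∑ m ∈ Finset.range N, ‖D m‖^2 = (n:ℝ) * N := by
    have hcast : ((∑ m ∈ Finset.range N, ‖D m‖^2 : ℝ) : ℂ)
        = ∑ m ∈ Finset.range N, (D m * (starRingEnd ℂ) (D m)) := by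
      rw [Complex.ofReal_sum]
      refine Finset.sum_congr rfl fun m _ => ?_
      rw [Complex.mul_conj]
      norm_cast
      rw [Complex.normSq_eq_norm_sq]
    rw [hDC] at hcast
    have : ((∑ m ∈ Finset.range N, ‖D m‖^2 : ℝ) : ℂ) = (((n:ℝ) * N : ℝ) : ℂ) := by
      rw [hcast]; push_cast; ring
    exact_mod_cast this
  have key := core_identity M hM c f
  have hnorm : (N:ℝ) * ‖∑ k : Fin M, (k:ℂ) * c k * e2 (f * k)‖ ≤ (n:ℝ) * N * S := by
    have h0 : ‖((N:ℕ):ℂ) * ∑ k : Fin M, (k:ℂ) * c k * e2 (f * k)‖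
        = (N:ℝ) * ‖∑ k : Fin M, (k:ℂ) * c k * e2 (f * k)‖ := by
      rw [norm_mul, Complex.norm_natCast]
    rw [← h0, key]
    calc ‖∑ m ∈ Finset.range N,
          (e2 ((n:ℝ) * m / N) * D m * (starRingEnd ℂ) (D m))
          * (∑ k : Fin M, c k * e2 ((f - (m:ℝ)/N) * k))‖
        ≤ ∑ m ∈ Finset.range N, ‖(e2 ((n:ℝ) * m / N) * D m * (starRingEnd ℂ) (D m))
          * (∑ k : Fin M, c k * e2 ((f - (m:ℝ)/N) * k))‖ := norm_sum_le _ _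
      _ ≤ ∑ m ∈ Finset.range N, ‖D m‖^2 * S := by
          refine Finset.sum_le_sum fun m _ => ?_
          rw [norm_mul, norm_mul, norm_mul, norm_e2, RCLike.norm_conj, one_mul, ← sq]
          exact mul_le_mul_of_nonneg_left (hS _) (by positivity)
      _ = (∑ m ∈ Finset.range N, ‖D m‖^2) * S := (Finset.sum_mul _ _ _).symm
      _ = (n:ℝ) * N * S := by rw [hDsum]
  nlinarith [hnorm, hNR, norm_nonneg (∑ k : Fin M, (k:ℂ) * c k * e2 (f * k))]

lemma hasDerivAt_exp_real (a : ℂ) (x : ℝ) :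
    HasDerivAt (fun y : ℝ => Complex.exp (a * y)) (a * Complex.exp (a * x)) x := by
  have h1 : HasDerivAt (fun z : ℂ => Complex.exp (a * z)) (a * Complex.exp (a * x)) (x:ℂ) := by
    exact ((Complex.hasDerivAt_exp (a * (x:ℂ))).comp (x:ℂ)
      ((hasDerivAt_id (x:ℂ)).const_mul a)).congr_deriv (by ring)
  exact h1.comp_ofReal

theorem stmt_11 (M : ℕ) (hM : 1 ≤ M) (c : Fin M → ℂ)
    (v : ℝ → ℂ)
    (hv : ∀ f : ℝ, v f = ∑ i : Fin M, c i * Complex.exp (2 * Real.pi * Complex.I * f * i))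
    (f₁ f₂ : ℝ) :
    ‖v f₁‖ - ‖v f₂‖
      ≤ 2 * Real.pi * M * |f₁ - f₂| * sSup ((fun f => ‖v f‖) '' Set.Ico (0 : ℝ) 1) := by
  have hveq : v = fun f => ∑ i : Fin M, c i * e2 (f * i) := by
    funext f
    rw [hv f]
    refine Finset.sum_congr rfl fun i _ => ?_
    congr 1
    rw [e2]
    congr 1
    push_cast
    ring
  set S := sSup ((fun f => ‖v f‖) '' Set.Ico (0 : ℝ) 1) with hSdef
  -- continuity
  have hcont : Continuous v := by
    rw [hveq]
    refine continuous_finset_sum _ fun i _ => continuous_const.mul ?_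
    exact Complex.continuous_exp.comp (by continuity)
  -- periodicity
  have hper : Function.Periodic v 1 := by
    intro x
    rw [hveq]
    refine Finset.sum_congr rfl fun i _ => ?_
    congr 1
    rw [show (x + 1) * ((i:ℕ):ℝ) = x * i + ((i:ℕ):ℤ) by push_cast; ring, e2_add, e2_int]
    rw [mul_one]
  -- bounded above
  have hbdd : BddAbove ((fun f => ‖v f‖) '' Set.Ico (0 : ℝ) 1) := by
    apply BddAbove.mono (Set.image_mono Set.Ico_subset_Icc_self)
    exact (isCompact_Icc.image (hcont.norm)).bddAbove
  have hSb : ∀ g : ℝ, ‖v g‖ ≤ S := by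
    intro g
    have h1 : v (Int.fract g) = v g := by
      rw [← Int.self_sub_floor]
      simpa only [mul_one] using hper.sub_int_mul_eq ⌊g⌋
    have h2 : Int.fract g ∈ Set.Ico (0:ℝ) 1 := ⟨Int.fract_nonneg g, Int.fract_lt_one g⟩
    have : ‖v (Int.fract g)‖ ∈ (fun f => ‖v f‖) '' Set.Ico (0 : ℝ) 1 :=
      ⟨Int.fract g, h2, rfl⟩
    rw [h1] at this
    exact le_csSup hbdd this
  have hS0 : 0 ≤ S := le_trans (norm_nonneg (v 0)) (hSb 0)
  -- derivative
  have hSb' : ∀ g : ℝ, ‖∑ i : Fin M, c i * e2 (g * i)‖ ≤ S := by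
    intro g
    rw [← congrFun hveq g]
    exact hSb g
  have hderiv : ∀ x : ℝ, HasDerivAt v
      ((2*(Real.pi:ℂ)*Complex.I) * ∑ k : Fin M, (k:ℂ) * c k * e2 (x * k)) x := by
    intro x
    rw [hveq]
    have h1 : ∀ k : Fin M, HasDerivAt (fun y : ℝ => c k * e2 (y * k))
        (c k * ((2*(Real.pi:ℂ)*Complex.I*(k:ℂ)) * e2 (x * k))) x := by
      intro k
      have h2 : ∀ y : ℝ, e2 (y * k) = Complex.exp ((2*(Real.pi:ℂ)*Complex.I*(k:ℂ)) * y) := by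
        intro y
        rw [e2]
        congr 1
        push_cast
        ring
      simp only [h2]
      exact (hasDerivAt_exp_real (2*(Real.pi:ℂ)*Complex.I*(k:ℂ)) x).const_mul (c k)
    have h4 := HasDerivAt.fun_sum (fun k (_ : k ∈ Finset.univ) => h1 k)
    refine h4.congr_deriv ?_
    rw [Finset.mul_sum]
    exact Finset.sum_congr rfl fun k _ => by ring
  -- derivative bound
  have hdbound : ∀ x : ℝ,
      ‖(2*(Real.pi:ℂ)*Complex.I) * ∑ k : Fin M, (k:ℂ) * c k * e2 (x * k)‖
        ≤ 2 * Real.pi * ((M - 1 : ℕ) * S) := by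
    intro x
    rw [norm_mul]
    have h5 : ‖2*(Real.pi:ℂ)*Complex.I‖ = 2 * Real.pi := by
      simp [norm_mul, Real.pi_nonneg, _root_.abs_of_nonneg]
    rw [h5]
    exact mul_le_mul_of_nonneg_left (core_bound M hM c S hSb' x) (by positivity)
  -- mean value inequality
  have hmv : ‖v f₁ - v f₂‖ ≤ (2 * Real.pi * ((M - 1 : ℕ) * S)) * ‖f₁ - f₂‖ := by
    apply Convex.norm_image_sub_le_of_norm_hasDerivWithin_le
      (fun x _ => (hderiv x).hasDerivWithinAt) (fun x _ => hdbound x)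
      convex_univ (Set.mem_univ f₂) (Set.mem_univ f₁)
  have h6 : ‖v f₁‖ - ‖v f₂‖ ≤ ‖v f₁ - v f₂‖ := norm_sub_norm_le _ _
  have h7 : ((M - 1 : ℕ):ℝ) ≤ (M:ℝ) := by
    have : (M - 1 : ℕ) ≤ M := by omega
    exact_mod_cast this
  calc ‖v f₁‖ - ‖v f₂‖ ≤ (2 * Real.pi * ((M - 1 : ℕ) * S)) * ‖f₁ - f₂‖ := le_trans h6 hmv
    _ ≤ (2 * Real.pi * ((M:ℝ) * S)) * ‖f₁ - f₂‖ := by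
        have hπ : (0:ℝ) ≤ 2 * Real.pi := by positivity
        have := mul_le_mul_of_nonneg_right h7 hS0
        nlinarith [norm_nonneg (f₁ - f₂), mul_le_mul_of_nonneg_left this hπ]
    _ = 2 * Real.pi * M * |f₁ - f₂| * S := by
        rw [Real.norm_eq_abs]
        ring
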